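/- If a real polynomial f with nonnegative coefficients has all of its complex roots real, then its coefficient sequence is log-concave: a_k^2 ≥ a_{k-1} a_{k+1} for all valid k. -/

import Mathlib

open Polynomial

/-- Coefficient sequence (indexed by `ℤ`) of `∏ (X + rᵢ)`. -/
noncomputable def newtonD : List ℝ → ℤ → ℝ
  | [], k => if k = 0 then 1 else 0
  | a :: l, k => newtonD l (k - 1) + a * newtonD l k

lemma newtonD_nonneg (l : List ℝ) (hl : ∀ r ∈ l, 0 ≤ r) (k : ℤ) : 0 ≤ newtonD l k := by
  induction l generalizing k with
  | nil => simp only [newtonD]; split_ifs <;> norm_num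
  | cons a l ih =>
    have ha : 0 ≤ a := hl a (by simp)
    have hl' : ∀ r ∈ l, 0 ≤ r := fun r hr => hl r (by simp [hr])
    simp only [newtonD]
    have := ih hl' (k - 1)
    have := ih hl' k
    positivity

lemma newtonD_neg : ∀ (l : List ℝ) (m : ℤ), m < 0 → newtonD l m = 0 := by
  intro l
  induction l with
  | nil => intro m hm; simp only [newtonD, if_neg (show ¬m = 0 by omega)]
  | cons d l ih =>
    intro m hm
    simp only [newtonD, ih m hm, ih (m - 1) (by omega), mul_zero, add_zero]

lemma newtonD_key (l : List ℝ) (hl : ∀ r ∈ l, 0 ≤ r) :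
    ∀ a b : ℤ, a ≤ b →
      newtonD l (a - 1) * newtonD l (b + 1) ≤ newtonD l a * newtonD l b := by
  induction l with
  | nil =>
    intro a b hab
    simp only [newtonD]
    have h1 : (if a - 1 = 0 then (1:ℝ) else 0) * (if b + 1 = 0 then (1:ℝ) else 0) = 0 := by
      split_ifs with h1 h2 <;> try norm_num
      omega
    rw [h1]
    have h2 : (0:ℝ) ≤ (if a = 0 then (1:ℝ) else 0) := by split_ifs <;> norm_num
    have h3 : (0:ℝ) ≤ (if b = 0 then (1:ℝ) else 0) := by split_ifs <;> norm_num
    positivity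
  | cons t l ih =>
    intro a b hab
    have ht : 0 ≤ t := hl t (by simp)
    have hl' : ∀ r ∈ l, 0 ≤ r := fun r hr => hl r (by simp [hr])
    have ih := ih hl'
    have h1 := ih (a - 1) (b - 1) (by omega)
    have hb : b - 1 + 1 = b := by ring
    rw [hb] at h1
    have h2 := ih (a - 1) b (by omega)
    have h3 : newtonD l (a - 1) * newtonD l b ≤ newtonD l a * newtonD l (b - 1) := by
      rcases eq_or_lt_of_le hab with h | h
      · subst h; rw [mul_comm]
      · have := ih a (b - 1) (by omega)
        simpa using this
    have h4 := ih a b hab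
    simp only [newtonD]
    rw [show b + 1 - 1 = b from by ring]
    nlinarith [h1, mul_le_mul_of_nonneg_left (h2.trans h3) ht,
      mul_le_mul_of_nonneg_left h4 (mul_nonneg ht ht)]

lemma newtonD_coeff (l : List ℝ) (c : ℝ) (k : ℕ) :
    (C c * (l.map fun r => X + C r).prod).coeff k = c * newtonD l (k : ℤ) := by
  induction l generalizing k with
  | nil =>
    simp only [List.map_nil, List.prod_nil, mul_one, coeff_C, newtonD]
    split_ifs with h h2 h3 <;> simp_all <;> omega
  | cons a l ih =>
    have hrw : C c * ((a :: l).map fun r => X + C r).prod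
        = (X + C a) * (C c * (l.map fun r => X + C r).prod) := by
      simp only [List.map_cons, List.prod_cons]; ring
    rw [hrw]
    set q := C c * (l.map fun r => X + C r).prod with hq
    rcases k with _ | k
    · rw [mul_coeff_zero]
      simp only [coeff_add, coeff_X_zero, coeff_C, if_pos rfl, zero_add]
      rw [hq, ih 0]
      simp only [newtonD, Nat.cast_zero]
      rw [newtonD_neg l (0 - 1) (by norm_num)]
      simp
      ring
    · simp only [add_mul, coeff_add, coeff_X_mul, coeff_C_mul]
      rw [hq, ih k, ih (k + 1)]
      simp only [newtonD]
      push_cast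
      ring

lemma newton_factor : ∀ (n : ℕ) (f : Polynomial ℝ), f.natDegree = n → f ≠ 0 →
    (∀ z : ℂ, (f.map (algebraMap ℝ ℂ)).IsRoot z → z.im = 0) →
    ∃ l : List ℝ, f = C f.leadingCoeff * (l.map fun r => X + C r).prod := by
  intro n
  induction n with
  | zero =>
    intro f hdeg hf _
    refine ⟨[], ?_⟩
    have hl : f.leadingCoeff = f.coeff 0 := by rw [Polynomial.leadingCoeff, hdeg]
    rw [hl]
    simpa using eq_C_of_natDegree_eq_zero hdeg
  | succ n ih =>
    intro f hdeg hf hrr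
    have hmapdeg : (f.map (algebraMap ℝ ℂ)).natDegree = n + 1 := by
      rw [natDegree_map]; exact hdeg
    have hdegpos : 0 < (f.map (algebraMap ℝ ℂ)).degree :=
      natDegree_pos_iff_degree_pos.mp (by omega)
    obtain ⟨z, hz⟩ := Complex.exists_root hdegpos
    have him := hrr z hz
    set r : ℝ := z.re with hr
    have hzr : z = (algebraMap ℝ ℂ) r := by
      apply Complex.ext <;> simp [him, hr]
    have hroot : f.IsRoot r := by
      have : (f.map (algebraMap ℝ ℂ)).eval ((algebraMap ℝ ℂ) r) = 0 := by
        rw [← hzr]; exact hz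
      rw [eval_map, eval₂_at_apply] at this
      exact (map_eq_zero_iff _ (algebraMap ℝ ℂ).injective).mp this
    obtain ⟨g, hg⟩ := dvd_iff_isRoot.mpr hroot
    have hg0 : g ≠ 0 := by
      intro h; apply hf; rw [hg, h, mul_zero]
    have hXC : (X - C r) ≠ (0 : Polynomial ℝ) := X_sub_C_ne_zero r
    have hgdeg : g.natDegree = n := by
      have := natDegree_mul hXC hg0
      rw [← hg, hdeg, natDegree_X_sub_C] at this
      omega
    have hglead : g.leadingCoeff = f.leadingCoeff := by
      rw [hg, leadingCoeff_mul, leadingCoeff_X_sub_C, one_mul]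
    have hgrr : ∀ z : ℂ, (g.map (algebraMap ℝ ℂ)).IsRoot z → z.im = 0 := by
      intro w hw
      apply hrr
      rw [hg, Polynomial.map_mul]
      exact IsRoot.dvd hw ⟨(X - C r).map (algebraMap ℝ ℂ), by ring⟩
    obtain ⟨l, hlf⟩ := ih g hgdeg hg0 hgrr
    refine ⟨-r :: l, ?_⟩
    calc f = (X - C r) * g := hg
      _ = (X - C r) * (C g.leadingCoeff * (l.map fun s => X + C s).prod) := by rw [← hlf]
      _ = C f.leadingCoeff * ((-r :: l).map fun s => X + C s).prod := by
          rw [hglead]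
          simp only [List.map_cons, List.prod_cons, map_neg]
          ring

theorem newton_logConcave (f : Polynomial ℝ)
    (h0 : ∀ k, 0 ≤ f.coeff k)
    (hrr : ∀ z : ℂ, (f.map (algebraMap ℝ ℂ)).IsRoot z → z.im = 0) :
    ∀ k, 1 ≤ k → f.coeff (k - 1) * f.coeff (k + 1) ≤ f.coeff k ^ 2 := by
  intro k hk
  by_cases hf : f = 0
  · simp [hf]
  obtain ⟨l, hlf⟩ := newton_factor f.natDegree f rfl hf hrr
  set c := f.leadingCoeff with hc
  have hc0 : 0 ≤ c := by
    rw [hc, leadingCoeff]; exact h0 _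
  -- all roots nonneg
  have hl : ∀ r ∈ l, 0 ≤ r := by
    intro r hr
    by_contra hneg
    push_neg at hneg
    -- then f.eval (-r) = 0, but f.eval (-r) > 0
    have heval0 : f.eval (-r) = 0 := by
      rw [hlf, eval_mul, eval_list_prod]
      have : (0:ℝ) ∈ (l.map fun s => X + C s).map (eval (-r)) := by
        simp only [List.map_map]
        refine List.mem_map.mpr ⟨r, hr, ?_⟩
        simp
      rw [List.prod_eq_zero this, mul_zero]
    have hpos : 0 < f.eval (-r) := by
      have hx : 0 < -r := by linarith
      rw [eval_eq_sum_range]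
      apply Finset.sum_pos'
      · intro i _
        exact mul_nonneg (h0 i) (le_of_lt (pow_pos hx i))
      · refine ⟨f.natDegree, Finset.self_mem_range_succ _, ?_⟩
        have hlc : 0 < f.coeff f.natDegree := by
          rcases lt_or_eq_of_le (h0 f.natDegree) with h | h
          · exact h
          · exact absurd h.symm (mt leadingCoeff_eq_zero.mp hf)
        exact mul_pos hlc (pow_pos hx _)
    rw [heval0] at hpos
    exact lt_irrefl 0 hpos
  have hco : ∀ m : ℕ, f.coeff m = c * newtonD l (m : ℤ) := by
    intro m
    rw [hlf]; exact newtonD_coeff l c m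
  have hkey := newtonD_key l hl (k : ℤ) (k : ℤ) le_rfl
  have hcast : ((k - 1 : ℕ) : ℤ) = (k : ℤ) - 1 := by
    omega
  rw [hco (k-1), hco (k+1), hco k, hcast]
  push_cast
  nlinarith [sq_nonneg c, newtonD_nonneg l hl ((k:ℤ) - 1), newtonD_nonneg l hl ((k:ℤ) + 1),
    newtonD_nonneg l hl (k : ℤ), mul_le_mul_of_nonneg_left hkey (mul_nonneg hc0 hc0)]
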